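/- Let γ⁺,γ⁻:[0,1]²→[0,∞) be measurable with γ⁺,γ⁻ ∈ L¹([0,1]²), and let f ∈ S₀. Define Γ(f) := { φ ∈ W₀ : ∫₀¹ φ(x,y,s) ds = f(x,y) for a.e. (x,y) }. Then inf over φ ∈ Γ(f) of ∫_{[0,1]³} ( √(γ⁺(x,y)(1−φ(x,y,s))) − √(γ⁻(x,y)φ(x,y,s)) )² dx dy ds equals ∫_{[0,1]²} ( √(γ⁺(x,y)(1−f(x,y))) − √(γ⁻(x,y)f(x,y)) )² dx dy, and the infimum is attained at the time-constant process φ(x,y,s) := f(x,y). -/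

import Mathlib

open MeasureTheory Filter Set
open scoped ENNReal

noncomputable section

/-- The unit interval `[0,1]` as a subset of `ℝ`. -/
def I01 : Set ℝ := Set.Icc 0 1

/-- The unit square `[0,1]²`. -/
def sq2 : Set (ℝ × ℝ) := I01 ×ˢ I01

/-- The unit cube `[0,1]³`, with coordinates `(x, y, s)`. -/
def cube3 : Set (ℝ × ℝ × ℝ) := I01 ×ˢ I01 ×ˢ I01

/-- Membership in `W₀`: a measurable function `[0,1]³ → [0,1]`. -/
def MemW0 (φ : ℝ × ℝ × ℝ → ℝ) : Prop :=
  Measurable φ ∧ ∀ p ∈ cube3, φ p ∈ Set.Icc (0:ℝ) 1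

/-- The time-homogeneous rate integrand, integrated over `[0,1]³`:
`∫ (√(γ⁺(x,y)(1−φ(x,y,s))) − √(γ⁻(x,y)φ(x,y,s)))² dx dy ds`. -/
def Jhom (γp γm : ℝ × ℝ → ℝ) (φ : ℝ × ℝ × ℝ → ℝ) : ℝ :=
  ∫ p in cube3,
    (Real.sqrt (γp (p.1, p.2.1) * (1 - φ p)) - Real.sqrt (γm (p.1, p.2.1) * φ p)) ^ 2

/- ### Auxiliary lemmas -/

lemma measurableSet_I01 : MeasurableSet I01 := measurableSet_Icc
lemma measurableSet_sq2 : MeasurableSet sq2 := measurableSet_I01.prod measurableSet_I01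
lemma measurableSet_cube3 : MeasurableSet cube3 :=
  measurableSet_I01.prod (measurableSet_I01.prod measurableSet_I01)

lemma volume_I01 : (volume I01) = 1 := by simp [I01]

instance : IsProbabilityMeasure (volume.restrict I01) :=
  ⟨by rw [Measure.restrict_apply_univ]; exact volume_I01⟩

lemma preimage_cube3 :
    (MeasurableEquiv.prodAssoc : (ℝ × ℝ) × ℝ ≃ᵐ ℝ × ℝ × ℝ) ⁻¹' cube3 = sq2 ×ˢ I01 := by
  ext ⟨⟨x, y⟩, s⟩
  simp [cube3, sq2, MeasurableEquiv.prodAssoc, Set.mem_prod, and_assoc, Equiv.prodAssoc]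

lemma restrict_prod_eq :
    ((volume.restrict sq2).prod (volume.restrict I01)) =
      (volume : Measure ((ℝ × ℝ) × ℝ)).restrict (sq2 ×ˢ I01) := by
  rw [Measure.prod_restrict, ← MeasureTheory.Measure.volume_eq_prod]

lemma integral_cube3 (G : ℝ × ℝ × ℝ → ℝ)
    (hG : Integrable (fun r : (ℝ × ℝ) × ℝ => G (r.1.1, r.1.2, r.2))
      ((volume.restrict sq2).prod (volume.restrict I01))) :
    ∫ p in cube3, G p = ∫ q in sq2, ∫ s in I01, G (q.1, q.2, s) := by
  have h1 : ∫ p in cube3, G p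
      = ∫ r in (MeasurableEquiv.prodAssoc : (ℝ × ℝ) × ℝ ≃ᵐ ℝ × ℝ × ℝ) ⁻¹' cube3,
          G (MeasurableEquiv.prodAssoc r) :=
    ((volume_preserving_prodAssoc).setIntegral_preimage_emb
      (MeasurableEquiv.prodAssoc).measurableEmbedding G cube3).symm
  rw [h1, preimage_cube3, ← restrict_prod_eq]
  exact integral_prod (fun r : (ℝ × ℝ) × ℝ => G (r.1.1, r.1.2, r.2)) hG

lemma lift_integrable (γ : ℝ × ℝ → ℝ) (hγm : Measurable γ) (hγi : IntegrableOn γ sq2) :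
    Integrable (fun r : (ℝ × ℝ) × ℝ => γ r.1)
      ((volume.restrict sq2).prod (volume.restrict I01)) := by
  have hmeas : AEStronglyMeasurable (fun r : (ℝ × ℝ) × ℝ => γ r.1)
      ((volume.restrict sq2).prod (volume.restrict I01)) :=
    (hγm.comp measurable_fst).aestronglyMeasurable
  rw [integrable_prod_iff hmeas]
  refine ⟨Eventually.of_forall fun q => integrable_const (γ q), ?_⟩
  simpa using hγi.norm

lemma rate_sq_bound (a b t : ℝ) (ha : 0 ≤ a) (hb : 0 ≤ b) (ht : t ∈ Set.Icc (0:ℝ) 1) :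
    ‖(Real.sqrt (a * (1 - t)) - Real.sqrt (b * t)) ^ 2‖ ≤ a + b := by
  rw [Real.norm_eq_abs, abs_of_nonneg (sq_nonneg _)]
  have h1 : Real.sqrt (a * (1 - t)) ^ 2 = a * (1 - t) :=
    Real.sq_sqrt (mul_nonneg ha (by linarith [ht.2]))
  have h2 : Real.sqrt (b * t) ^ 2 = b * t := Real.sq_sqrt (mul_nonneg hb ht.1)
  nlinarith [mul_nonneg (Real.sqrt_nonneg (a * (1 - t))) (Real.sqrt_nonneg (b * t)),
    mul_nonneg ha ht.1, mul_nonneg hb (by linarith [ht.2] : (0:ℝ) ≤ 1 - t)]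

lemma sqrt_rate_convexOn {a b : ℝ} (ha : 0 ≤ a) (hb : 0 ≤ b) :
    ConvexOn ℝ (Set.Icc (0:ℝ) 1)
      (fun t => (Real.sqrt (a * (1 - t)) - Real.sqrt (b * t)) ^ 2) := by
  have hq : ConcaveOn ℝ (Set.Icc (0:ℝ) 1) (fun t => t * (1 - t)) := by
    refine ⟨convex_Icc 0 1, fun x hx y hy c d hc hd hcd => ?_⟩
    simp only [smul_eq_mul]
    have hd1 : d = 1 - c := by linarith
    subst hd1
    nlinarith [mul_nonneg (mul_nonneg hc hd) (sq_nonneg (x - y))]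
  have hk : ConcaveOn ℝ (Set.Icc (0:ℝ) 1) (fun t => Real.sqrt (t * (1 - t))) := by
    refine ⟨convex_Icc 0 1, fun x hx y hy c d hc hd hcd => ?_⟩
    have hx0 : (0:ℝ) ≤ x * (1 - x) := mul_nonneg hx.1 (by linarith [hx.2])
    have hy0 : (0:ℝ) ≤ y * (1 - y) := mul_nonneg hy.1 (by linarith [hy.2])
    have h2 := (Real.strictConcaveOn_sqrt.concaveOn).2 (mem_Ici.mpr hx0) (mem_Ici.mpr hy0)
      hc hd hcd
    calc c • Real.sqrt (x * (1 - x)) + d • Real.sqrt (y * (1 - y))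
        ≤ Real.sqrt (c • (x * (1 - x)) + d • (y * (1 - y))) := h2
      _ ≤ Real.sqrt ((c • x + d • y) * (1 - (c • x + d • y))) :=
          Real.sqrt_le_sqrt (hq.2 hx hy hc hd hcd)
  have hh : ConvexOn ℝ (Set.Icc (0:ℝ) 1)
      (fun t => (a * (1 - t) + b * t) + (2 * Real.sqrt (a * b)) * (-Real.sqrt (t * (1 - t)))) := by
    refine ConvexOn.add ?_ ?_
    · refine ⟨convex_Icc 0 1, fun x hx y hy c d hc hd hcd => ?_⟩
      simp only [smul_eq_mul]
      have : a * (1 - (c * x + d * y)) + b * (c * x + d * y)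
          = c * (a * (1 - x) + b * x) + d * (a * (1 - y) + b * y) := by
        linear_combination (-a) * hcd
      linarith [this]
    · have h := ConvexOn.smul (c := 2 * Real.sqrt (a * b)) (by positivity) hk.neg
      convert h using 2 with t <;> rfl
  have key : ∀ t ∈ Set.Icc (0:ℝ) 1, (Real.sqrt (a * (1 - t)) - Real.sqrt (b * t)) ^ 2
      = (a * (1 - t) + b * t) + (2 * Real.sqrt (a * b)) * (-Real.sqrt (t * (1 - t))) := by
    intro t ht
    have h1 : Real.sqrt (a * (1 - t)) ^ 2 = a * (1 - t) :=
      Real.sq_sqrt (mul_nonneg ha (by linarith [ht.2]))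
    have h2 : Real.sqrt (b * t) ^ 2 = b * t := Real.sq_sqrt (mul_nonneg hb ht.1)
    have h3 : Real.sqrt (a * (1 - t)) * Real.sqrt (b * t)
        = Real.sqrt (a * b) * Real.sqrt (t * (1 - t)) := by
      rw [← Real.sqrt_mul (mul_nonneg ha (by linarith [ht.2])),
        ← Real.sqrt_mul (mul_nonneg ha hb)]
      ring_nf
    linear_combination h1 + h2 - 2 * h3
  refine ⟨convex_Icc 0 1, fun x hx y hy c d hc hd hcd => ?_⟩
  dsimp only
  rw [key _ hx, key _ hy, key _ ((convex_Icc (0:ℝ) 1) hx hy hc hd hcd)]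
  exact hh.2 hx hy hc hd hcd

lemma jensen_slice (a b : ℝ) (ha : 0 ≤ a) (hb : 0 ≤ b) (ψ : ℝ → ℝ)
    (hψm : Measurable ψ) (hψ01 : ∀ s ∈ I01, ψ s ∈ Set.Icc (0:ℝ) 1) :
    (Real.sqrt (a * (1 - ∫ s in I01, ψ s)) - Real.sqrt (b * ∫ s in I01, ψ s)) ^ 2
      ≤ ∫ s in I01, (Real.sqrt (a * (1 - ψ s)) - Real.sqrt (b * ψ s)) ^ 2 := by
  have hgc : Continuous (fun t : ℝ => (Real.sqrt (a * (1 - t)) - Real.sqrt (b * t)) ^ 2) := by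
    have h1 : Continuous fun t : ℝ => a * (1 - t) := by continuity
    have h2 : Continuous fun t : ℝ => b * t := by continuity
    exact ((Real.continuous_sqrt.comp h1).sub (Real.continuous_sqrt.comp h2)).pow 2
  have hmem : ∀ᵐ s ∂(volume.restrict I01), ψ s ∈ Set.Icc (0:ℝ) 1 :=
    (ae_restrict_mem measurableSet_I01).mono fun s hs => hψ01 s hs
  have hψi : Integrable ψ (volume.restrict I01) := by
    refine Integrable.mono' (integrable_const 1) hψm.aestronglyMeasurable ?_
    filter_upwards [hmem] with s hs
    rw [Real.norm_eq_abs, abs_le]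
    exact ⟨by linarith [hs.1], hs.2⟩
  have hgi : Integrable ((fun t : ℝ => (Real.sqrt (a * (1 - t)) - Real.sqrt (b * t)) ^ 2) ∘ ψ)
      (volume.restrict I01) := by
    refine Integrable.mono' (integrable_const (a + b))
      ((hgc.measurable.comp hψm).aestronglyMeasurable) ?_
    filter_upwards [hmem] with s hs
    exact rate_sq_bound a b (ψ s) ha hb hs
  exact (sqrt_rate_convexOn ha hb).map_integral_le hgc.continuousOn isClosed_Icc hmem hψi hgi

/-- **Corollary (time-homogeneous rate function).**
For nonnegative `γ⁺, γ⁻ ∈ L¹([0,1]²)` and `f ∈ S₀`, the infimum of the rate over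
`Γ(f) = {φ ∈ W₀ : ∫₀¹ φ(·,·,s) ds = f a.e.}` equals
`∫ (√(γ⁺(1−f)) − √(γ⁻f))²`, and it is attained at the time-constant process `φ ≡ f`. -/
theorem homogeneous_rate_inf
    (γp γm : ℝ × ℝ → ℝ)
    (hγp_meas : Measurable γp) (hγm_meas : Measurable γm)
    (hγp_nonneg : ∀ q, 0 ≤ γp q) (hγm_nonneg : ∀ q, 0 ≤ γm q)
    (hγp_int : IntegrableOn γp sq2) (hγm_int : IntegrableOn γm sq2)
    (f : ℝ × ℝ → ℝ) (hf_meas : Measurable f)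
    (hf_01 : ∀ q ∈ sq2, f q ∈ Set.Icc (0:ℝ) 1) :
    sInf {r : ℝ | ∃ φ : ℝ × ℝ × ℝ → ℝ, MemW0 φ ∧
        (∀ᵐ q ∂(volume.restrict sq2), (∫ s in I01, φ (q.1, q.2, s)) = f q) ∧
        r = Jhom γp γm φ}
      = ∫ q in sq2, (Real.sqrt (γp q * (1 - f q)) - Real.sqrt (γm q * f q)) ^ 2
    ∧ MemW0 (fun p => f (p.1, p.2.1))
    ∧ (∀ᵐ q ∂(volume.restrict sq2), (∫ s in I01, f (q.1, q.2)) = f q)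
    ∧ Jhom γp γm (fun p => f (p.1, p.2.1))
        = ∫ q in sq2, (Real.sqrt (γp q * (1 - f q)) - Real.sqrt (γm q * f q)) ^ 2 := by
  have hTm : Measurable (fun q : ℝ × ℝ =>
      (Real.sqrt (γp q * (1 - f q)) - Real.sqrt (γm q * f q)) ^ 2) :=
    ((Real.continuous_sqrt.measurable.comp (hγp_meas.mul (measurable_const.sub hf_meas))).sub
      (Real.continuous_sqrt.measurable.comp (hγm_meas.mul hf_meas))).pow_const 2
  have hTi : IntegrableOn (fun q : ℝ × ℝ =>
      (Real.sqrt (γp q * (1 - f q)) - Real.sqrt (γm q * f q)) ^ 2) sq2 := by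
    refine Integrable.mono' (hγp_int.add hγm_int) hTm.aestronglyMeasurable ?_
    filter_upwards [ae_restrict_mem measurableSet_sq2] with q hq
    exact rate_sq_bound _ _ _ (hγp_nonneg q) (hγm_nonneg q) (hf_01 q hq)
  have h2 : MemW0 (fun p : ℝ × ℝ × ℝ => f (p.1, p.2.1)) := by
    refine ⟨hf_meas.comp (measurable_fst.prodMk measurable_snd.fst), ?_⟩
    rintro ⟨x, y, s⟩ hp
    exact hf_01 _ ⟨hp.1, hp.2.1⟩
  have h3 : ∀ᵐ q ∂(volume.restrict sq2), (∫ s in I01, f (q.1, q.2)) = f q := by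
    refine Eventually.of_forall fun q => ?_
    simp [integral_const]
  have hTlift := lift_integrable _ hTm hTi
  have h4 : Jhom γp γm (fun p => f (p.1, p.2.1))
      = ∫ q in sq2, (Real.sqrt (γp q * (1 - f q)) - Real.sqrt (γm q * f q)) ^ 2 := by
    have hcube := integral_cube3
      (fun p : ℝ × ℝ × ℝ => (Real.sqrt (γp (p.1, p.2.1) * (1 - f (p.1, p.2.1)))
        - Real.sqrt (γm (p.1, p.2.1) * f (p.1, p.2.1))) ^ 2) hTlift
    calc Jhom γp γm (fun p => f (p.1, p.2.1))
        = ∫ q in sq2, ∫ _s in I01,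
            (Real.sqrt (γp (q.1, q.2) * (1 - f (q.1, q.2)))
              - Real.sqrt (γm (q.1, q.2) * f (q.1, q.2))) ^ 2 := hcube
      _ = ∫ q in sq2, (Real.sqrt (γp q * (1 - f q)) - Real.sqrt (γm q * f q)) ^ 2 := by
          simp [integral_const]
  have hlb : ∀ r ∈ {r : ℝ | ∃ φ : ℝ × ℝ × ℝ → ℝ, MemW0 φ ∧
        (∀ᵐ q ∂(volume.restrict sq2), (∫ s in I01, φ (q.1, q.2, s)) = f q) ∧
        r = Jhom γp γm φ},
      (∫ q in sq2, (Real.sqrt (γp q * (1 - f q)) - Real.sqrt (γm q * f q)) ^ 2) ≤ r := by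
    rintro r ⟨φ, ⟨hφm, hφ01⟩, hφae, rfl⟩
    have hmap : Measurable (fun rr : (ℝ × ℝ) × ℝ => (rr.1.1, rr.1.2, rr.2)) :=
      measurable_fst.fst.prodMk (measurable_fst.snd.prodMk measurable_snd)
    have hFm : Measurable (fun rr : (ℝ × ℝ) × ℝ =>
        (Real.sqrt (γp rr.1 * (1 - φ (rr.1.1, rr.1.2, rr.2)))
          - Real.sqrt (γm rr.1 * φ (rr.1.1, rr.1.2, rr.2))) ^ 2) :=
      ((Real.continuous_sqrt.measurable.comp ((hγp_meas.comp measurable_fst).mul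
        (measurable_const.sub (hφm.comp hmap)))).sub
        (Real.continuous_sqrt.measurable.comp ((hγm_meas.comp measurable_fst).mul
        (hφm.comp hmap)))).pow_const 2
    have hmemp : ∀ᵐ rr ∂((volume.restrict sq2).prod (volume.restrict I01)),
        rr ∈ sq2 ×ˢ I01 := by
      rw [restrict_prod_eq]
      exact ae_restrict_mem (measurableSet_sq2.prod measurableSet_I01)
    have hFi : Integrable (fun rr : (ℝ × ℝ) × ℝ =>
        (Real.sqrt (γp rr.1 * (1 - φ (rr.1.1, rr.1.2, rr.2)))
          - Real.sqrt (γm rr.1 * φ (rr.1.1, rr.1.2, rr.2))) ^ 2)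
        ((volume.restrict sq2).prod (volume.restrict I01)) := by
      refine Integrable.mono' ((lift_integrable γp hγp_meas hγp_int).add
        (lift_integrable γm hγm_meas hγm_int)) hFm.aestronglyMeasurable ?_
      filter_upwards [hmemp] with rr hrr
      have hc : (rr.1.1, rr.1.2, rr.2) ∈ cube3 := ⟨hrr.1.1, hrr.1.2, hrr.2⟩
      exact rate_sq_bound _ _ _ (hγp_nonneg rr.1) (hγm_nonneg rr.1) (hφ01 _ hc)
    have hJ := integral_cube3 (fun p : ℝ × ℝ × ℝ =>
      (Real.sqrt (γp (p.1, p.2.1) * (1 - φ p)) - Real.sqrt (γm (p.1, p.2.1) * φ p)) ^ 2) hFi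
    have hInt := hFi.integral_prod_left
    calc (∫ q in sq2, (Real.sqrt (γp q * (1 - f q)) - Real.sqrt (γm q * f q)) ^ 2)
        ≤ ∫ q in sq2, ∫ s in I01,
            (Real.sqrt (γp (q.1, q.2) * (1 - φ (q.1, q.2, s)))
              - Real.sqrt (γm (q.1, q.2) * φ (q.1, q.2, s))) ^ 2 := by
          refine integral_mono_ae hTi hInt ?_
          filter_upwards [hφae, ae_restrict_mem measurableSet_sq2] with q hqe hqm
          have hj := jensen_slice (γp q) (γm q) (hγp_nonneg q) (hγm_nonneg q)
            (fun s => φ (q.1, q.2, s))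
            (hφm.comp (measurable_const.prodMk (measurable_const.prodMk measurable_id)))
            (fun s hs => hφ01 _ ⟨hqm.1, hqm.2, hs⟩)
          rw [hqe] at hj
          exact hj
      _ = Jhom γp γm φ := hJ.symm
  have hmemS : (∫ q in sq2, (Real.sqrt (γp q * (1 - f q)) - Real.sqrt (γm q * f q)) ^ 2) ∈
      {r : ℝ | ∃ φ : ℝ × ℝ × ℝ → ℝ, MemW0 φ ∧
        (∀ᵐ q ∂(volume.restrict sq2), (∫ s in I01, φ (q.1, q.2, s)) = f q) ∧
        r = Jhom γp γm φ} :=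
    ⟨fun p => f (p.1, p.2.1), h2, h3, h4.symm⟩
  exact ⟨le_antisymm (csInf_le ⟨_, fun r hr => hlb r hr⟩ hmemS) (le_csInf ⟨_, hmemS⟩ hlb),
    h2, h3, h4⟩
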